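/- Let div(x,y) = 2(2 − 5ax − 2y) and k(x,y) = 4(2 − 3ax + 2y). For 0 < a < 1/4 and the parameterization y_±(τ) = (−1 ± 2√(aτ(τ−τ₁)(τ₂−τ)))/(2τ) of the oval of 1/4 + x − x² + ax³ + xy + x²y² = 0 with P(x,y) = 2(1 + 2x − 2ax² + 6xy), the following algebraic identity holds for all τ ∈ (τ₁, τ₂): ((−2·div + 3k)/P)(τ, y₊(τ)) − ((−2·div + 3k)/P)(τ, y₋(τ)) = 8√(aτ(τ−τ₁)(τ₂−τ)) / (τ(1 + 8τ + aτ²)). -/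

import Mathlib

set_option maxHeartbeats 1000000


/-- For `0 < a < 1/4`, with `div(x,y) = 2(2 − 5ax − 2y)`, `k(x,y) = 4(2 − 3ax + 2y)`,
`P(x,y) = 2(1 + 2x − 2ax² + 6xy)`, and the parameterizations
`y_±(τ) = (−1 ± 2√(aτ(τ−τ₁)(τ₂−τ)))/(2τ)` of the oval, one has for all
`τ ∈ (τ₁, τ₂)`:
`((−2·div + 3k)/P)(τ, y₊(τ)) − ((−2·div + 3k)/P)(τ, y₋(τ))
  = 8√(aτ(τ−τ₁)(τ₂−τ)) / (τ(1 + 8τ + aτ²))`. -/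
theorem stmt_19 (a : ℝ) (ha1 : 0 < a) (ha2 : a < 1 / 4)
    (τ₁ τ₂ : ℝ)
    (hτ₁ : τ₁ = (1 - Real.sqrt (1 - 4 * a)) / (2 * a))
    (hτ₂ : τ₂ = (1 + Real.sqrt (1 - 4 * a)) / (2 * a))
    (dv k P : ℝ × ℝ → ℝ)
    (hdv : ∀ p : ℝ × ℝ, dv p = 2 * (2 - 5 * a * p.1 - 2 * p.2))
    (hk : ∀ p : ℝ × ℝ, k p = 4 * (2 - 3 * a * p.1 + 2 * p.2))
    (hP : ∀ p : ℝ × ℝ, P p = 2 * (1 + 2 * p.1 - 2 * a * p.1 ^ 2 + 6 * p.1 * p.2))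
    (yp ym : ℝ → ℝ)
    (hyp : ∀ τ, yp τ = (-1 + 2 * Real.sqrt (a * τ * (τ - τ₁) * (τ₂ - τ)))
      / (2 * τ))
    (hym : ∀ τ, ym τ = (-1 - 2 * Real.sqrt (a * τ * (τ - τ₁) * (τ₂ - τ)))
      / (2 * τ)) :
    ∀ τ ∈ Set.Ioo τ₁ τ₂,
      (-2 * dv (τ, yp τ) + 3 * k (τ, yp τ)) / P (τ, yp τ)
        - (-2 * dv (τ, ym τ) + 3 * k (τ, ym τ)) / P (τ, ym τ)
      = 8 * Real.sqrt (a * τ * (τ - τ₁) * (τ₂ - τ))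
          / (τ * (1 + 8 * τ + a * τ ^ 2)) := by
  intro τ hτ
  obtain ⟨hτl, hτr⟩ := hτ
  have ha0 : a ≠ 0 := ne_of_gt ha1
  set σ := Real.sqrt (1 - 4 * a) with hσdef
  have hσ2 : σ ^ 2 = 1 - 4 * a := Real.sq_sqrt (by linarith)
  have hσ0 : 0 ≤ σ := Real.sqrt_nonneg _
  have hσlt : σ < 1 := by nlinarith
  have hτ1pos : 0 < τ₁ := by
    rw [hτ₁]
    apply div_pos <;> linarith
  have hτpos : 0 < τ := lt_trans hτ1pos hτl
  have hτne : τ ≠ 0 := ne_of_gt hτpos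
  have harg : 0 < a * τ * (τ - τ₁) * (τ₂ - τ) := by
    apply mul_pos (mul_pos (mul_pos ha1 hτpos) (by linarith)) (by linarith)
  set s := Real.sqrt (a * τ * (τ - τ₁) * (τ₂ - τ)) with hsdef
  have hs2 : s ^ 2 = a * τ * (τ - τ₁) * (τ₂ - τ) := Real.sq_sqrt (le_of_lt harg)
  have hspos : 0 < s := Real.sqrt_pos.mpr harg
  -- express s^2 as a polynomial in τ
  have hs2' : s ^ 2 = -(a * τ ^ 3) + τ ^ 2 - τ := by
    rw [hs2, hτ₁, hτ₂]
    field_simp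
    linear_combination hσ2
  set u : ℝ := τ - a * τ ^ 2 - 1 with hudef
  have hupos : 0 < u := by
    have h1 : 0 < a * (τ - τ₁) * (τ₂ - τ) := by
      apply mul_pos (mul_pos ha1 (by linarith)) (by linarith)
    have h2 : a * (τ - τ₁) * (τ₂ - τ) = u := by
      rw [hτ₁, hτ₂, hudef]
      field_simp
      linear_combination hσ2
    linarith [h2 ▸ h1]
  have hkey : u ^ 2 - 9 * s ^ 2 = -u * (1 + 8 * τ + a * τ ^ 2) := by
    rw [hs2', hudef]; ring
  have hden : 0 < 1 + 8 * τ + a * τ ^ 2 := by positivity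
  have hne1 : u + 3 * s ≠ 0 := by positivity
  have hne2 : u - 3 * s ≠ 0 := by nlinarith
  have hNp : -2 * dv (τ, yp τ) + 3 * k (τ, yp τ) = 16 * (u + 2 * s) / τ := by
    rw [hdv, hk, hyp, hudef]
    field_simp
    ring
  have hNm : -2 * dv (τ, ym τ) + 3 * k (τ, ym τ) = 16 * (u - 2 * s) / τ := by
    rw [hdv, hk, hym, hudef]
    field_simp
    ring
  have hPp : P (τ, yp τ) = 4 * (u + 3 * s) := by
    rw [hP, hyp, hudef, ← hsdef]
    field_simp
    ring
  have hPm : P (τ, ym τ) = 4 * (u - 3 * s) := by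
    rw [hP, hym, hudef, ← hsdef]
    field_simp
    ring
  rw [hNp, hNm, hPp, hPm]
  rw [div_sub_div _ _ (by positivity : (4:ℝ) * (u + 3 * s) ≠ 0) (by simpa using mul_ne_zero (by norm_num : (4:ℝ) ≠ 0) hne2)]
  rw [div_eq_div_iff (by apply mul_ne_zero (mul_ne_zero (by norm_num) hne1) (mul_ne_zero (by norm_num) hne2)) (by positivity)]
  field_simp
  linear_combination (128 * s * τ) * hkey + (2304 * τ * s + 288 * s * (1 - 4 * τ)) * hs2'
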